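/- If z : [0,∞) → ℝ is a solution of z' = −z³(θ_1 z − θ_2)e^{−θ_3 z} with θ_1, θ_2, θ_3 > 0 and z(0) > 0, then z(t) > 0 for all t ≥ 0, z is bounded, and z(t) → θ_2/θ_1 as t → ∞. -/

import Mathlib

open Real in
theorem solution_convergence (θ1 θ2 θ3 : ℝ) (hθ1 : 0 < θ1) (hθ2 : 0 < θ2) (hθ3 : 0 < θ3)
    (z : ℝ → ℝ)
    (hz : ∀ t ≥ 0, HasDerivAt z (-(z t) ^ 3 * (θ1 * z t - θ2) * exp (-θ3 * z t)) t)
    (hz0 : 0 < z 0) :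
    (∀ t ≥ 0, 0 < z t) ∧
    (∃ B, ∀ t ≥ 0, |z t| ≤ B) ∧
    Filter.Tendsto z Filter.atTop (nhds (θ2 / θ1)) := by
  set c : ℝ := θ2 / θ1 with hcdef
  have hc0 : 0 < c := div_pos hθ2 hθ1
  have hθc : θ1 * c = θ2 := by rw [hcdef]; field_simp
  set f : ℝ → ℝ := fun x => -x ^ 3 * (θ1 * x - θ2) * Real.exp (-θ3 * x) with hfdef
  have hz' : ∀ t ≥ 0, HasDerivAt z (f (z t)) t := hz
  have hfpos : ∀ x : ℝ, 0 < x → x < c → 0 < f x := by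
    intro x hx hxc
    have h1 : 0 < θ2 - θ1 * x := by nlinarith
    have h2 : f x = x ^ 3 * (θ2 - θ1 * x) * Real.exp (-θ3 * x) := by
      simp only [hfdef]; ring
    rw [h2]; positivity
  have hfneg : ∀ x : ℝ, c < x → f x < 0 := by
    intro x hxc
    have hx : 0 < x := hc0.trans hxc
    have h1 : 0 < θ1 * x - θ2 := by nlinarith
    have h2 : 0 < x ^ 3 * (θ1 * x - θ2) * Real.exp (-θ3 * x) := by positivity
    have h3 : f x = -(x ^ 3 * (θ1 * x - θ2) * Real.exp (-θ3 * x)) := by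
      simp only [hfdef]; ring
    rw [h3]; linarith
  have hfc : f c = 0 := by
    simp only [hfdef]
    rw [show θ1 * c - θ2 = 0 by rw [hθc]; ring]
    ring
  have hcont : ContinuousOn z (Set.Ici 0) := fun t ht =>
    ((hz' t ht).continuousAt).continuousWithinAt
  have mvt : ∀ a b : ℝ, 0 ≤ a → a < b →
      ∃ ξ ∈ Set.Ioo a b, f (z ξ) = (z b - z a) / (b - a) := by
    intro a b ha hab
    exact exists_hasDerivAt_eq_slope z (fun t => f (z t)) hab
      (hcont.mono (fun x hx => le_trans ha hx.1))
      (fun x hx => hz' x (ha.trans hx.1.le))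
  set m : ℝ := min (z 0) c with hmdef
  have hm0 : 0 < m := lt_min hz0 hc0
  have hlow : ∀ t, 0 ≤ t → m ≤ z t := by
    intro t ht
    by_contra hcon
    push_neg at hcon
    have ht0 : 0 < t := by
      rcases eq_or_lt_of_le ht with h | h
      · exact absurd hcon (by rw [← h]; exact not_lt.2 (min_le_left _ _))
      · exact h
    have hScl : IsClosed (Set.Icc 0 t ∩ z ⁻¹' Set.Ici m) :=
      ContinuousOn.preimage_isClosed_of_isClosed
        (hcont.mono (fun x hx => hx.1)) isClosed_Icc isClosed_Ici
    have hS0 : (0:ℝ) ∈ Set.Icc 0 t ∩ z ⁻¹' Set.Ici m :=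
      ⟨⟨le_refl 0, ht0.le⟩, Set.mem_preimage.2 (Set.mem_Ici.2 (min_le_left _ _))⟩
    have hSbdd : BddAbove (Set.Icc 0 t ∩ z ⁻¹' Set.Ici m) := ⟨t, fun x hx => hx.1.2⟩
    set s := sSup (Set.Icc 0 t ∩ z ⁻¹' Set.Ici m) with hsdef
    have hsS : s ∈ Set.Icc 0 t ∩ z ⁻¹' Set.Ici m := hScl.csSup_mem ⟨0, hS0⟩ hSbdd
    have hs0 : 0 ≤ s := hsS.1.1
    have hsm : m ≤ z s := hsS.2
    have hst : s < t := lt_of_le_of_ne hsS.1.2 (fun h => absurd (h ▸ hsm) (not_le.2 hcon))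
    have hbelow : ∀ u, s < u → u ≤ t → z u < m := by
      intro u hsu hut
      by_contra hum
      push_neg at hum
      exact absurd (le_csSup hSbdd ⟨⟨hs0.trans hsu.le, hut⟩, hum⟩) (not_le.2 hsu)
    by_cases hpos : ∀ u, s < u → u ≤ t → 0 < z u
    · obtain ⟨ξ, hξ, hslope⟩ := mvt s t hs0 hst
      have h1 : 0 < f (z ξ) := hfpos _ (hpos ξ hξ.1 hξ.2.le)
        (lt_of_lt_of_le (hbelow ξ hξ.1 hξ.2.le) (min_le_right _ _))
      have h2 : (z t - z s) / (t - s) < 0 :=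
        div_neg_of_neg_of_pos (by linarith) (by linarith)
      rw [hslope] at h1
      linarith
    · push_neg at hpos
      obtain ⟨u, hsu, hut, hu0⟩ := hpos
      have hTcl : IsClosed (Set.Icc s u ∩ z ⁻¹' Set.Iic 0) :=
        ContinuousOn.preimage_isClosed_of_isClosed
          (hcont.mono (fun x hx => hs0.trans hx.1)) isClosed_Icc isClosed_Iic
      have hTu : u ∈ Set.Icc s u ∩ z ⁻¹' Set.Iic 0 := ⟨⟨hsu.le, le_refl u⟩, hu0⟩
      have hTbdd : BddBelow (Set.Icc s u ∩ z ⁻¹' Set.Iic 0) := ⟨s, fun x hx => hx.1.1⟩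
      set t2 := sInf (Set.Icc s u ∩ z ⁻¹' Set.Iic 0) with ht2def
      have ht2T : t2 ∈ Set.Icc s u ∩ z ⁻¹' Set.Iic 0 := hTcl.csInf_mem ⟨u, hTu⟩ hTbdd
      have hst2 : s < t2 := by
        rcases eq_or_lt_of_le ht2T.1.1 with h | h
        · exact absurd ht2T.2 (by rw [← h]; exact not_le.2 (lt_of_lt_of_le hm0 hsm))
        · exact h
      obtain ⟨ξ, hξ, hslope⟩ := mvt s t2 hs0 hst2
      have hξpos : 0 < z ξ := by
        by_contra h
        push_neg at h
        exact absurd (csInf_le hTbdd ⟨⟨hξ.1.le, hξ.2.le.trans ht2T.1.2⟩, h⟩)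
          (not_le.2 hξ.2)
      have hξm : z ξ < m := hbelow ξ hξ.1 ((hξ.2.le.trans ht2T.1.2).trans hut)
      have h1 : 0 < f (z ξ) := hfpos _ hξpos (lt_of_lt_of_le hξm (min_le_right _ _))
      have h2 : (z t2 - z s) / (t2 - s) < 0 := by
        have : z t2 ≤ 0 := ht2T.2
        exact div_neg_of_neg_of_pos (by linarith) (by linarith)
      rw [hslope] at h1
      linarith
  set M : ℝ := max (z 0) c with hMdef
  have hcM : c ≤ M := le_max_right _ _
  have hupp : ∀ t, 0 ≤ t → z t ≤ M := by
    intro t ht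
    by_contra hcon
    push_neg at hcon
    have ht0 : 0 < t := by
      rcases eq_or_lt_of_le ht with h | h
      · exact absurd hcon (by rw [← h]; exact not_lt.2 (le_max_left _ _))
      · exact h
    have hScl : IsClosed (Set.Icc 0 t ∩ z ⁻¹' Set.Iic M) :=
      ContinuousOn.preimage_isClosed_of_isClosed
        (hcont.mono (fun x hx => hx.1)) isClosed_Icc isClosed_Iic
    have hS0 : (0:ℝ) ∈ Set.Icc 0 t ∩ z ⁻¹' Set.Iic M :=
      ⟨⟨le_refl 0, ht0.le⟩, Set.mem_preimage.2 (Set.mem_Iic.2 (le_max_left _ _))⟩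
    have hSbdd : BddAbove (Set.Icc 0 t ∩ z ⁻¹' Set.Iic M) := ⟨t, fun x hx => hx.1.2⟩
    set s := sSup (Set.Icc 0 t ∩ z ⁻¹' Set.Iic M) with hsdef
    have hsS : s ∈ Set.Icc 0 t ∩ z ⁻¹' Set.Iic M := hScl.csSup_mem ⟨0, hS0⟩ hSbdd
    have hs0 : 0 ≤ s := hsS.1.1
    have hsM : z s ≤ M := hsS.2
    have hst : s < t := lt_of_le_of_ne hsS.1.2 (fun h => absurd (h ▸ hsM) (not_le.2 hcon))
    have habove : ∀ u, s < u → u ≤ t → M < z u := by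
      intro u hsu hut
      by_contra hum
      push_neg at hum
      exact absurd (le_csSup hSbdd ⟨⟨hs0.trans hsu.le, hut⟩, hum⟩) (not_le.2 hsu)
    obtain ⟨ξ, hξ, hslope⟩ := mvt s t hs0 hst
    have h1 : f (z ξ) < 0 := hfneg _ (lt_of_le_of_lt hcM (habove ξ hξ.1 hξ.2.le))
    have h2 : 0 < (z t - z s) / (t - s) :=
      div_pos (by linarith) (by linarith)
    rw [hslope] at h1
    linarith
  refine ⟨fun t ht => lt_of_lt_of_le hm0 (hlow t ht), ⟨M, fun t ht => ?_⟩, ?_⟩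
  · rw [abs_le]
    constructor
    · have := hlow t ht
      have hM0 : 0 < M := lt_of_lt_of_le hc0 hcM
      linarith
    · exact hupp t ht
  rcases le_or_gt (z 0) c with hzc | hzc
  · -- z 0 ≤ c : monotone case
    have hmz : m = z 0 := min_eq_left hzc
    have hMc : M = c := max_eq_right hzc
    have hmono : MonotoneOn z (Set.Ici 0) := by
      apply monotoneOn_of_deriv_nonneg (convex_Ici 0) hcont
      · intro x hx
        rw [interior_Ici] at hx
        exact ((hz' x hx.le).differentiableAt).differentiableWithinAt
      · intro x hx
        rw [interior_Ici] at hx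
        rw [(hz' x hx.le).deriv]
        have hxc : z x ≤ c := by have := hupp x hx.le; rwa [hMc] at this
        have hxp : 0 < z x := lt_of_lt_of_le hm0 (hlow x hx.le)
        rcases lt_or_eq_of_le hxc with h | h
        · exact (hfpos _ hxp h).le
        · rw [h, hfc]
    rw [Metric.tendsto_atTop]
    intro ε hε
    have hex : ∃ T, 0 ≤ T ∧ c - ε < z T := by
      by_contra hcon
      push_neg at hcon
      have hεc : ε ≤ c - z 0 := by linarith [hcon 0 le_rfl]
      set δ : ℝ := (z 0) ^ 3 * (θ1 * ε) * Real.exp (-θ3 * c) with hδdef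
      have hδ0 : 0 < δ :=
        mul_pos (mul_pos (pow_pos hz0 3) (mul_pos hθ1 hε)) (Real.exp_pos _)
      have hkey : ∀ x : ℝ, z 0 ≤ x → x ≤ c - ε → δ ≤ f x := by
        intro x h1 h2
        have hx0 : 0 < x := lt_of_lt_of_le hz0 h1
        have hfx : f x = x ^ 3 * (θ2 - θ1 * x) * Real.exp (-θ3 * x) := by
          simp only [hfdef]; ring
        rw [hfx, hδdef]
        have e1 : θ1 * ε ≤ θ2 - θ1 * x := by nlinarith
        have e2 : Real.exp (-θ3 * c) ≤ Real.exp (-θ3 * x) := by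
          apply Real.exp_le_exp.2; nlinarith
        have e3 : (z 0) ^ 3 ≤ x ^ 3 := pow_le_pow_left₀ hz0.le h1 3
        have p1 : (0:ℝ) ≤ (z 0) ^ 3 := (pow_pos hz0 3).le
        have p2 : (0:ℝ) ≤ θ1 * ε := (mul_pos hθ1 hε).le
        have p3 : (0:ℝ) ≤ Real.exp (-θ3 * c) := (Real.exp_pos _).le
        calc (z 0) ^ 3 * (θ1 * ε) * Real.exp (-θ3 * c)
            ≤ x ^ 3 * (θ2 - θ1 * x) * Real.exp (-θ3 * c) := by
              apply mul_le_mul_of_nonneg_right _ p3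
              exact mul_le_mul e3 e1 p2 (pow_pos hx0 3).le
          _ ≤ x ^ 3 * (θ2 - θ1 * x) * Real.exp (-θ3 * x) := by
              apply mul_le_mul_of_nonneg_left e2
              exact mul_nonneg (pow_pos hx0 3).le (by linarith)
      have ht0 : (0:ℝ) < c / δ + 1 := by positivity
      obtain ⟨ξ, hξ, hslope⟩ := mvt 0 (c / δ + 1) le_rfl ht0
      have hξlow : z 0 ≤ z ξ :=
        hmono Set.self_mem_Ici (Set.mem_Ici.2 hξ.1.le) hξ.1.le
      have hδle : δ ≤ (z (c / δ + 1) - z 0) / (c / δ + 1 - 0) := by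
        rw [← hslope]; exact hkey _ hξlow (hcon ξ hξ.1.le)
      have h1 : δ * (c / δ + 1 - 0) ≤ z (c / δ + 1) - z 0 :=
        (le_div_iff₀ (by linarith)).1 hδle
      have h2 : δ * (c / δ + 1 - 0) = c + δ := by
        field_simp
        ring
      have h3 : z (c / δ + 1) ≤ c - ε := hcon _ ht0.le
      linarith
    obtain ⟨T, hT0, hTz⟩ := hex
    refine ⟨T, fun t ht => ?_⟩
    have ht0 : 0 ≤ t := hT0.trans ht
    have l1 : z T ≤ z t := hmono (Set.mem_Ici.2 hT0) (Set.mem_Ici.2 ht0) ht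
    have l2 : z t ≤ c := by have := hupp t ht0; rwa [hMc] at this
    rw [Real.dist_eq, abs_lt]
    constructor <;> linarith
  · -- c < z 0 : antitone case
    have hmz : m = c := min_eq_right hzc.le
    have hMc : M = z 0 := max_eq_left hzc.le
    have hanti : AntitoneOn z (Set.Ici 0) := by
      apply antitoneOn_of_deriv_nonpos (convex_Ici 0) hcont
      · intro x hx
        rw [interior_Ici] at hx
        exact ((hz' x hx.le).differentiableAt).differentiableWithinAt
      · intro x hx
        rw [interior_Ici] at hx
        rw [(hz' x hx.le).deriv]
        have hxc : c ≤ z x := by have := hlow x hx.le; rwa [hmz] at this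
        rcases lt_or_eq_of_le hxc with h | h
        · exact (hfneg _ h).le
        · rw [← h, hfc]
    rw [Metric.tendsto_atTop]
    intro ε hε
    have hex : ∃ T, 0 ≤ T ∧ z T < c + ε := by
      by_contra hcon
      push_neg at hcon
      have hεc : c + ε ≤ z 0 := hcon 0 le_rfl
      set δ : ℝ := c ^ 3 * (θ1 * ε) * Real.exp (-θ3 * z 0) with hδdef
      have hδ0 : 0 < δ :=
        mul_pos (mul_pos (pow_pos hc0 3) (mul_pos hθ1 hε)) (Real.exp_pos _)
      have hkey : ∀ x : ℝ, c + ε ≤ x → x ≤ z 0 → f x ≤ -δ := by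
        intro x h1 h2
        have hx0 : 0 < x := by linarith
        have hfx : f x = -(x ^ 3 * (θ1 * x - θ2) * Real.exp (-θ3 * x)) := by
          simp only [hfdef]; ring
        rw [hfx]
        have e1 : θ1 * ε ≤ θ1 * x - θ2 := by nlinarith
        have e2 : Real.exp (-θ3 * z 0) ≤ Real.exp (-θ3 * x) := by
          apply Real.exp_le_exp.2; nlinarith
        have e3 : c ^ 3 ≤ x ^ 3 := pow_le_pow_left₀ hc0.le (by linarith) 3
        have p2 : (0:ℝ) ≤ θ1 * ε := (mul_pos hθ1 hε).le
        have hinner : δ ≤ x ^ 3 * (θ1 * x - θ2) * Real.exp (-θ3 * x) := by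
          rw [hδdef]
          calc c ^ 3 * (θ1 * ε) * Real.exp (-θ3 * z 0)
              ≤ x ^ 3 * (θ1 * x - θ2) * Real.exp (-θ3 * z 0) := by
                apply mul_le_mul_of_nonneg_right _ (Real.exp_pos _).le
                exact mul_le_mul e3 e1 p2 (pow_pos hx0 3).le
            _ ≤ x ^ 3 * (θ1 * x - θ2) * Real.exp (-θ3 * x) := by
                apply mul_le_mul_of_nonneg_left e2
                exact mul_nonneg (pow_pos hx0 3).le (by linarith)
        linarith
      have ht0 : (0:ℝ) < z 0 / δ + 1 := by positivity
      obtain ⟨ξ, hξ, hslope⟩ := mvt 0 (z 0 / δ + 1) le_rfl ht0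
      have hξupp : z ξ ≤ z 0 :=
        hanti Set.self_mem_Ici (Set.mem_Ici.2 hξ.1.le) hξ.1.le
      have hδle : (z (z 0 / δ + 1) - z 0) / (z 0 / δ + 1 - 0) ≤ -δ := by
        rw [← hslope]; exact hkey _ (hcon ξ hξ.1.le) hξupp
      have h1 : z (z 0 / δ + 1) - z 0 ≤ -δ * (z 0 / δ + 1 - 0) :=
        (div_le_iff₀ (by linarith)).1 hδle
      have h2 : -δ * (z 0 / δ + 1 - 0) = -(z 0 + δ) := by
        field_simp
        ring
      have h3 : c ≤ z (z 0 / δ + 1) := by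
        have := hlow _ ht0.le; rwa [hmz] at this
      linarith
    obtain ⟨T, hT0, hTz⟩ := hex
    refine ⟨T, fun t ht => ?_⟩
    have ht0 : 0 ≤ t := hT0.trans ht
    have l1 : z t ≤ z T := hanti (Set.mem_Ici.2 hT0) (Set.mem_Ici.2 ht0) ht
    have l2 : c ≤ z t := by have := hlow t ht0; rwa [hmz] at this
    rw [Real.dist_eq, abs_lt]
    constructor <;> linarith
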